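/- Let T : D(T) ⊆ H₁ → H₂ be a densely defined closed operator, E = [[0,T*],[T,0]], and λ ≠ 0. Then λ is an eigenvalue of E if and only if λ² is an eigenvalue of TT*, if and only if λ² is an eigenvalue of T*T. -/

import Mathlib

open LinearPMap

variable {H₁ H₂ : Type*}
  [NormedAddCommGroup H₁] [InnerProductSpace ℂ H₁] [CompleteSpace H₁]
  [NormedAddCommGroup H₂] [InnerProductSpace ℂ H₂] [CompleteSpace H₂]

/-- The block operator matrix `E = [[0, T*], [T, 0]]` acting on the Hilbert space direct sum
`H₁ ⊕ H₂` (realised as `WithLp 2 (H₁ × H₂)`), with domain `D(T) ⊕ D(T*)`, acting by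
`E (u, v) = (T* v, T u)`. -/
noncomputable def blockOp (T : H₁ →ₗ.[ℂ] H₂) :
    (WithLp 2 (H₁ × H₂)) →ₗ.[ℂ] (WithLp 2 (H₁ × H₂)) where
  domain := (T.domain.prod T.adjoint.domain).comap
      (WithLp.linearEquiv 2 ℂ (H₁ × H₂)).toLinearMap
  toFun :=
    (WithLp.linearEquiv 2 ℂ (H₁ × H₂)).symm.toLinearMap.comp <|
      LinearMap.prod
        (T.adjoint.toFun.comp <|
          LinearMap.codRestrict T.adjoint.domain
            ((LinearMap.snd ℂ H₁ H₂).comp <|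
              (WithLp.linearEquiv 2 ℂ (H₁ × H₂)).toLinearMap.comp
                ((T.domain.prod T.adjoint.domain).comap
                  (WithLp.linearEquiv 2 ℂ (H₁ × H₂)).toLinearMap).subtype)
            (fun c => c.2.2))
        (T.toFun.comp <|
          LinearMap.codRestrict T.domain
            ((LinearMap.fst ℂ H₁ H₂).comp <|
              (WithLp.linearEquiv 2 ℂ (H₁ × H₂)).toLinearMap.comp
                ((T.domain.prod T.adjoint.domain).comap
                  (WithLp.linearEquiv 2 ℂ (H₁ × H₂)).toLinearMap).subtype)
            (fun c => c.2.1))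

/-- `μ` is an eigenvalue of the partially defined operator `A`. -/
def LinearPMap.HasEigenvalue {E : Type*} [NormedAddCommGroup E] [InnerProductSpace ℂ E]
    (A : E →ₗ.[ℂ] E) (μ : ℂ) : Prop :=
  ∃ x : A.domain, (x : E) ≠ 0 ∧ A x = μ • (x : E)

/-- `μ` is an eigenvalue of `T T*` (the product being taken on its natural domain
`{v ∈ D(T*) : T* v ∈ D(T)}`). -/
def hasEigenvalueTTstar (T : H₁ →ₗ.[ℂ] H₂) (μ : ℂ) : Prop :=
  ∃ v : T.adjoint.domain, (v : H₂) ≠ 0 ∧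
    ∃ h : T.adjoint v ∈ T.domain, T ⟨T.adjoint v, h⟩ = μ • (v : H₂)

/-- `μ` is an eigenvalue of `T* T` (the product being taken on its natural domain
`{u ∈ D(T) : T u ∈ D(T*)}`). -/
def hasEigenvalueTstarT (T : H₁ →ₗ.[ℂ] H₂) (μ : ℂ) : Prop :=
  ∃ u : T.domain, (u : H₁) ≠ 0 ∧
    ∃ h : T u ∈ T.adjoint.domain, T.adjoint ⟨T u, h⟩ = μ • (u : H₁)

set_option linter.unusedSectionVars false

lemma blockOp_mem_domain (T : H₁ →ₗ.[ℂ] H₂) (x : WithLp 2 (H₁ × H₂)) :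
    x ∈ (blockOp T).domain ↔ x.ofLp.1 ∈ T.domain ∧ x.ofLp.2 ∈ T.adjoint.domain := Iff.rfl

lemma blockOp_apply (T : H₁ →ₗ.[ℂ] H₂) (x : WithLp 2 (H₁ × H₂)) (hx : x ∈ (blockOp T).domain) :
    blockOp T ⟨x, hx⟩ = WithLp.toLp 2 (T.adjoint ⟨x.ofLp.2, hx.2⟩, T ⟨x.ofLp.1, hx.1⟩) := rfl

lemma ttstar_iff_tstart (T : H₁ →ₗ.[ℂ] H₂) (μ : ℂ) (hμ : μ ≠ 0) :
    hasEigenvalueTTstar T μ ↔ hasEigenvalueTstarT T μ := by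
  constructor
  · rintro ⟨v, hv0, hmem, heq⟩
    have hmem2 : T ⟨T.adjoint v, hmem⟩ ∈ T.adjoint.domain := by
      rw [heq]; exact T.adjoint.domain.smul_mem μ v.2
    refine ⟨⟨T.adjoint v, hmem⟩, ?_, hmem2, ?_⟩
    · intro h0
      have hz : (⟨T.adjoint v, hmem⟩ : T.domain) = 0 := Subtype.ext h0
      rw [hz, T.map_zero] at heq
      exact hv0 ((smul_eq_zero.mp heq.symm).resolve_left hμ)
    · have hsub : (⟨T ⟨T.adjoint v, hmem⟩, hmem2⟩ : T.adjoint.domain) = μ • v :=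
        Subtype.ext heq
      rw [hsub, T.adjoint.map_smul]
  · rintro ⟨u, hu0, hmem, heq⟩
    have hmem2 : T.adjoint ⟨T u, hmem⟩ ∈ T.domain := by
      rw [heq]; exact T.domain.smul_mem μ u.2
    refine ⟨⟨T u, hmem⟩, ?_, hmem2, ?_⟩
    · intro h0
      have hz : (⟨T u, hmem⟩ : T.adjoint.domain) = 0 := Subtype.ext h0
      rw [hz, T.adjoint.map_zero] at heq
      exact hu0 ((smul_eq_zero.mp heq.symm).resolve_left hμ)
    · have hsub : (⟨T.adjoint ⟨T u, hmem⟩, hmem2⟩ : T.domain) = μ • u :=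
        Subtype.ext heq
      rw [hsub, T.map_smul]

lemma blockOp_iff_ttstar (T : H₁ →ₗ.[ℂ] H₂) (lam : ℂ) (hlam : lam ≠ 0) :
    (blockOp T).HasEigenvalue lam ↔ hasEigenvalueTTstar T (lam ^ 2) := by
  constructor
  · rintro ⟨⟨⟨x⟩, hx⟩, hx0, hEx⟩
    rw [blockOp_apply T (WithLp.toLp 2 x) hx] at hEx
    have h₁ : T.adjoint ⟨x.2, hx.2⟩ = lam • x.1 := congrArg (fun y => y.ofLp.1) hEx
    have h₂ : T ⟨x.1, hx.1⟩ = lam • x.2 := congrArg (fun y => y.ofLp.2) hEx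
    have hv0 : x.2 ≠ 0 := by
      intro h0
      apply hx0
      have hz : (⟨x.2, hx.2⟩ : T.adjoint.domain) = 0 := Subtype.ext h0
      rw [hz, T.adjoint.map_zero] at h₁
      have hx1 : x.1 = 0 := (smul_eq_zero.mp h₁.symm).resolve_left hlam
      show WithLp.toLp 2 x = 0
      exact congrArg (WithLp.toLp 2) (Prod.ext hx1 h0)
    have hmem : T.adjoint ⟨x.2, hx.2⟩ ∈ T.domain := by
      rw [h₁]; exact T.domain.smul_mem lam hx.1
    refine ⟨⟨x.2, hx.2⟩, hv0, hmem, ?_⟩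
    have hsub : (⟨T.adjoint ⟨x.2, hx.2⟩, hmem⟩ : T.domain) = lam • ⟨x.1, hx.1⟩ :=
      Subtype.ext h₁
    rw [hsub, T.map_smul, h₂, smul_smul, ← sq]
  · rintro ⟨v, hv0, hmem, heq⟩
    set x : WithLp 2 (H₁ × H₂) := WithLp.toLp 2 (lam⁻¹ • T.adjoint v, (v : H₂)) with hxdef
    have hx : x ∈ (blockOp T).domain :=
      ⟨T.domain.smul_mem lam⁻¹ hmem, v.2⟩
    refine ⟨⟨x, hx⟩, ?_, ?_⟩
    · intro h0
      exact hv0 (congrArg (fun y => y.ofLp.2) h0)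
    · rw [blockOp_apply T x hx]
      have e1 : (⟨x.ofLp.2, hx.2⟩ : T.adjoint.domain) = v := Subtype.ext rfl
      have e2 : (⟨x.ofLp.1, hx.1⟩ : T.domain) = lam⁻¹ • ⟨T.adjoint v, hmem⟩ := Subtype.ext rfl
      show WithLp.toLp 2 (T.adjoint ⟨x.ofLp.2, hx.2⟩, T ⟨x.ofLp.1, hx.1⟩) = WithLp.toLp 2 (lam • x.ofLp.1, lam • x.ofLp.2)
      rw [e1, e2, T.map_smul, heq]
      refine congrArg (WithLp.toLp 2) (Prod.ext ?_ ?_)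
      · show T.adjoint v = lam • lam⁻¹ • T.adjoint v
        rw [smul_smul, mul_inv_cancel₀ hlam, one_smul]
      · show lam⁻¹ • lam ^ 2 • (v : H₂) = lam • (v : H₂)
        rw [smul_smul, sq, ← mul_assoc, inv_mul_cancel₀ hlam, one_mul]


/-- For a densely defined closed operator `T` and `λ ≠ 0`: `λ` is an eigenvalue
of the block operator `E = [[0,T*],[T,0]]` iff `λ²` is an eigenvalue of `T T*`, iff `λ²` is an
eigenvalue of `T* T`. -/
theorem blockOp_hasEigenvalue_iff_sq
    [TopologicalSpace.SeparableSpace H₁] [TopologicalSpace.SeparableSpace H₂]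
    (T : H₁ →ₗ.[ℂ] H₂) (hdense : Dense (T.domain : Set H₁)) (hclosed : T.IsClosed)
    (lam : ℂ) (hlam : lam ≠ 0) :
    ((blockOp T).HasEigenvalue lam ↔ hasEigenvalueTTstar T (lam ^ 2)) ∧
      (hasEigenvalueTTstar T (lam ^ 2) ↔ hasEigenvalueTstarT T (lam ^ 2)) := by
  
  exact ⟨blockOp_iff_ttstar T lam hlam, ttstar_iff_tstart T (lam ^ 2) (pow_ne_zero 2 hlam)⟩
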